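/- Let a₁/b₁, ..., aₘ/bₘ and c₁/d₁, ..., cₖ/dₖ be rational numbers (with bᵢ, dⱼ > 0). If for all i and j we have aᵢ/bᵢ ≤ cⱼ/dⱼ - (bᵢ - 1)(dⱼ - 1)/(bᵢ dⱼ), then there exists an integer n satisfying n ≥ aᵢ/bᵢ for all i and n ≤ cⱼ/dⱼ for all j. -/

import Mathlib

private lemma ceil_le_div (a b c d : ℤ) (hb : 0 < b) (hd : 0 < d)
    (h : (a : ℚ) / (b : ℚ) ≤ (c : ℚ) / (d : ℚ) -
      ((b : ℚ) - 1) * ((d : ℚ) - 1) / ((b : ℚ) * (d : ℚ))) :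
    ((⌈(a : ℚ) / (b : ℚ)⌉ : ℚ)) ≤ (c : ℚ) / (d : ℚ) := by
  set N : ℤ := ⌈(a : ℚ) / (b : ℚ)⌉ with hN
  have hbq : (0 : ℚ) < (b : ℚ) := by exact_mod_cast hb
  have hdq : (0 : ℚ) < (d : ℚ) := by exact_mod_cast hd
  -- From ceil: N - 1 < a/b, so (N-1)*b < a, so N*b ≤ a + b - 1
  have h1 : ((N : ℚ) - 1) < (a : ℚ) / (b : ℚ) := by
    have := Int.ceil_lt_add_one ((a : ℚ) / (b : ℚ))
    rw [← hN] at this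
    linarith
  have h1' : ((N : ℚ) - 1) * (b : ℚ) < (a : ℚ) := (lt_div_iff₀ hbq).mp h1
  have h2 : N * b ≤ a + b - 1 := by
    have : (N : ℚ) * (b : ℚ) < (a : ℚ) + (b : ℚ) := by nlinarith
    have : N * b < a + b := by exact_mod_cast this
    omega
  -- From h: a*d ≤ c*b - (b-1)*(d-1)
  have h3 : (a : ℚ) * (d : ℚ) ≤ (c : ℚ) * (b : ℚ) - ((b : ℚ) - 1) * ((d : ℚ) - 1) := by
    have h' := h
    field_simp at h'
    rw [mul_comm (b : ℚ) (c : ℚ)] at h'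
    have hbd : (0 : ℚ) < (b : ℚ) * (d : ℚ) := mul_pos hbq hdq
    exact le_of_mul_le_mul_right (by nlinarith [h']) hbd
  have h3' : a * d ≤ c * b - (b - 1) * (d - 1) := by exact_mod_cast h3
  -- Combine: b*(d*N) ≤ b*c + b - 1, so d*N ≤ c
  have h4 : d * N ≤ c := by nlinarith [hb, hd]
  rw [le_div_iff₀ hdq]
  calc (N : ℚ) * (d : ℚ) = ((d * N : ℤ) : ℚ) := by push_cast; ring
    _ ≤ (c : ℚ) := by exact_mod_cast h4

/-- **Integer point criterion for a system of rational bounds.**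
Given rationals `aᵢ/bᵢ` and `cⱼ/dⱼ` (with `bᵢ, dⱼ > 0`), if for all `i, j` we have
`aᵢ/bᵢ ≤ cⱼ/dⱼ - (bᵢ - 1)(dⱼ - 1)/(bᵢ dⱼ)`, then there is an integer `n` with
`aᵢ/bᵢ ≤ n` for all `i` and `n ≤ cⱼ/dⱼ` for all `j`. -/
theorem exists_int_of_pairwise_bounds (m k : ℕ) (a b : Fin m → ℤ) (c d : Fin k → ℤ)
    (hb : ∀ i, 0 < b i) (hd : ∀ j, 0 < d j)
    (h : ∀ i j, (a i : ℚ) / (b i : ℚ) ≤ (c j : ℚ) / (d j : ℚ) -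
      ((b i : ℚ) - 1) * ((d j : ℚ) - 1) / ((b i : ℚ) * (d j : ℚ))) :
    ∃ n : ℤ, (∀ i, (a i : ℚ) / (b i : ℚ) ≤ (n : ℚ)) ∧
      (∀ j, (n : ℚ) ≤ (c j : ℚ) / (d j : ℚ)) := by
  rcases Nat.eq_zero_or_pos m with hm | hm
  · rcases Nat.eq_zero_or_pos k with hk | hk
    · exact ⟨0, fun i => absurd i.2 (by omega), fun j => absurd j.2 (by omega)⟩
    · have hne : (Finset.univ : Finset (Fin k)).Nonempty := ⟨⟨0, hk⟩, Finset.mem_univ _⟩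
      refine ⟨Finset.univ.inf' hne (fun j => ⌊(c j : ℚ) / (d j : ℚ)⌋),
        fun i => absurd i.2 (by omega), fun j => ?_⟩
      have h1 : Finset.univ.inf' hne (fun j => ⌊(c j : ℚ) / (d j : ℚ)⌋) ≤
          ⌊(c j : ℚ) / (d j : ℚ)⌋ := Finset.inf'_le _ (Finset.mem_univ j)
      calc ((Finset.univ.inf' hne (fun j => ⌊(c j : ℚ) / (d j : ℚ)⌋) : ℤ) : ℚ)
          ≤ ((⌊(c j : ℚ) / (d j : ℚ)⌋ : ℤ) : ℚ) := by exact_mod_cast h1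
        _ ≤ (c j : ℚ) / (d j : ℚ) := Int.floor_le _
  · have hne : (Finset.univ : Finset (Fin m)).Nonempty := ⟨⟨0, hm⟩, Finset.mem_univ _⟩
    set n := Finset.univ.sup' hne (fun i => ⌈(a i : ℚ) / (b i : ℚ)⌉) with hn
    refine ⟨n, fun i => ?_, fun j => ?_⟩
    · have h1 : ⌈(a i : ℚ) / (b i : ℚ)⌉ ≤ n := Finset.le_sup' (fun i => ⌈(a i : ℚ) / (b i : ℚ)⌉) (Finset.mem_univ i)
      calc (a i : ℚ) / (b i : ℚ) ≤ ((⌈(a i : ℚ) / (b i : ℚ)⌉ : ℤ) : ℚ) := Int.le_ceil _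
        _ ≤ (n : ℚ) := by exact_mod_cast h1
    · obtain ⟨i0, _, hi0⟩ := Finset.exists_mem_eq_sup' hne (fun i => ⌈(a i : ℚ) / (b i : ℚ)⌉)
      rw [hn, hi0]
      exact ceil_le_div _ _ _ _ (hb i0) (hd j) (h i0 j)
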